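/- Let 𝒮 = ℕ^{<ℕ} be the set of finite sequences of natural numbers, and for s ∈ 𝒮 let |s| be its length and write t ⪯ s if s extends t. Let T ⊆ 𝒮 be a tree (downward closed under ⪯). In ℓ¹(𝒮), define a_s = ∑_{t ⪯ s} 2^{-|t|} δ_t and b_s = 2^{-|s|} δ_s. Let W_T ⊆ ℓ¹(𝒮) ⊕ ℓ¹(𝒮) be the closed linear span of { a_s ⊕ b_s : s ∈ T }. Then every element ξ ⊕ η ∈ W_T satisfies: ξ(t) = 0 = η(t) for all t ∈ 𝒮 \ T, and ξ(t) = η(t) + 2 ∑_{k∈ℕ} ξ(t⌢k) for all t ∈ 𝒮, where t⌢k denotes t with k appended. -/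

import Mathlib

/-- `δ_t ∈ ℓ¹(ℕ^{<ℕ})`, the indicator of the singleton `{t}`. -/
noncomputable def deltaVec (t : List ℕ) : lp (fun _ : List ℕ => ℝ) 1 := lp.single 1 t 1

/-- `a_s = ∑_{t ⪯ s} 2^{-|t|} δ_t`. -/
noncomputable def aVec (s : List ℕ) : lp (fun _ : List ℕ => ℝ) 1 :=
  ∑ t ∈ s.inits.toFinset, (2 : ℝ) ^ (-(t.length : ℤ)) • deltaVec t

/-- `b_s = 2^{-|s|} δ_s`. -/
noncomputable def bVec (s : List ℕ) : lp (fun _ : List ℕ => ℝ) 1 :=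
  (2 : ℝ) ^ (-(s.length : ℤ)) • deltaVec s

/-- `W_T`, the closed linear span of `{a_s ⊕ b_s : s ∈ T}` in `ℓ¹ ⊕ ℓ¹`. -/
noncomputable def Wspace (T : Set (List ℕ)) :
    Set ((lp (fun _ : List ℕ => ℝ) 1) × (lp (fun _ : List ℕ => ℝ) 1)) :=
  closure ((Submodule.span ℝ ((fun s => (aVec s, bVec s)) '' T) : Submodule ℝ _) : Set _)

-- basic coefficient formulas
lemma deltaVec_apply (t s : List ℕ) : deltaVec t s = if s = t then 1 else 0 := by
  rw [deltaVec, lp.single_apply]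
  split_ifs with h <;> simp [h]

lemma aVec_apply (s t : List ℕ) :
    aVec s t = if t <+: s then (2 : ℝ) ^ (-(t.length : ℤ)) else 0 := by
  rw [aVec, lp.coeFn_sum, Finset.sum_apply]
  have : ∀ u ∈ s.inits.toFinset,
      ((2 : ℝ) ^ (-(u.length : ℤ)) • deltaVec u) t
        = if t = u then (2 : ℝ) ^ (-(u.length : ℤ)) else 0 := by
    intro u _
    rw [lp.coeFn_smul, Pi.smul_apply, deltaVec_apply]
    split_ifs <;> simp
  rw [Finset.sum_congr rfl this, Finset.sum_ite_eq]
  simp [List.mem_inits]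

lemma bVec_apply (s t : List ℕ) :
    bVec s t = if t = s then (2 : ℝ) ^ (-(s.length : ℤ)) else 0 := by
  rw [bVec, lp.coeFn_smul, Pi.smul_apply, deltaVec_apply]
  split_ifs <;> simp

-- summability
lemma summable_lp (f : lp (fun _ : List ℕ => ℝ) 1) : Summable (fun s : List ℕ => ‖f s‖) := by
  have := (lp.memℓp f).summable (p := 1) (by norm_num)
  simpa using this

lemma summable_children (f : lp (fun _ : List ℕ => ℝ) 1) (t : List ℕ) :
    Summable (fun k : ℕ => f (t ++ [k])) := by
  have hi : Function.Injective (fun k : ℕ => t ++ [k]) := by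
    intro a b h
    simpa using h
  exact ((summable_lp f).of_norm).comp_injective hi

-- the evaluation functional
noncomputable def evalCLM (t : List ℕ) : lp (fun _ : List ℕ => ℝ) 1 →L[ℝ] ℝ :=
  LinearMap.mkContinuous
    { toFun := fun f => f t
      map_add' := fun f g => by simp
      map_smul' := fun c f => by simp }
    1 (fun f => by
      exact (by simpa using lp.norm_apply_le_norm (p := 1) one_ne_zero f t : ‖f t‖ ≤ 1 * ‖f‖))

@[simp] lemma evalCLM_apply (t : List ℕ) (f : lp (fun _ : List ℕ => ℝ) 1) :
    evalCLM t f = f t := rfl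

-- the child-sum functional
noncomputable def sumCLM (t : List ℕ) : lp (fun _ : List ℕ => ℝ) 1 →L[ℝ] ℝ :=
  LinearMap.mkContinuous
    { toFun := fun f => ∑' k : ℕ, f (t ++ [k])
      map_add' := fun f g => by
        simpa using Summable.tsum_add (summable_children f t) (summable_children g t)
      map_smul' := fun c f => by
        simpa [smul_eq_mul] using tsum_mul_left (a := c) (f := fun k : ℕ => f (t ++ [k])) }
    1 (fun f => by
      simp only [LinearMap.coe_mk, AddHom.coe_mk, one_mul]
      calc ‖∑' k : ℕ, f (t ++ [k])‖ ≤ ∑' k : ℕ, ‖f (t ++ [k])‖ :=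
            norm_tsum_le_tsum_norm ((summable_children f t).norm)
        _ ≤ ∑' s : List ℕ, ‖f s‖ := by
            refine Summable.tsum_le_tsum_of_inj (fun k : ℕ => t ++ [k]) (fun a b h => by simpa using h)
              (fun _ _ => norm_nonneg _) (fun _ => le_rfl)
              ((summable_children f t).norm) (summable_lp f)
        _ = ‖f‖ := by
            rw [lp.norm_eq_tsum_rpow (by norm_num) f]
            simp)

@[simp] lemma sumCLM_apply (t : List ℕ) (f : lp (fun _ : List ℕ => ℝ) 1) :
    sumCLM t f = ∑' k : ℕ, f (t ++ [k]) := rfl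

-- functionals vanishing on generators vanish on Wspace
lemma vanish_of_vanish_gen (T : Set (List ℕ))
    (φ : ((lp (fun _ : List ℕ => ℝ) 1) × (lp (fun _ : List ℕ => ℝ) 1)) →L[ℝ] ℝ)
    (h : ∀ s ∈ T, φ (aVec s, bVec s) = 0)
    {x} (hx : x ∈ Wspace T) : φ x = 0 := by
  have hspan : (Submodule.span ℝ ((fun s => (aVec s, bVec s)) '' T) : Set _)
      ⊆ φ ⁻¹' {0} := by
    intro y hy
    have : Submodule.span ℝ ((fun s => (aVec s, bVec s)) '' T)
        ≤ LinearMap.ker (φ : _ →ₗ[ℝ] ℝ) := by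
      rw [Submodule.span_le]
      rintro _ ⟨s, hs, rfl⟩
      exact h s hs
    simpa using this hy
  have := closure_minimal hspan (isClosed_singleton.preimage φ.continuous)
  exact this hx

-- key computation: sum over children of aVec
lemma tsum_aVec_children (s t : List ℕ) :
    aVec s t = bVec s t + 2 * ∑' k : ℕ, aVec s (t ++ [k]) := by
  by_cases hp : t <+: s
  · by_cases he : t = s
    · subst he
      have hz : ∀ k : ℕ, aVec t (t ++ [k]) = 0 := by
        intro k
        rw [aVec_apply, if_neg]
        intro h
        have := h.length_le
        simp at this
      simp [hz, aVec_apply, bVec_apply, tsum_zero]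
    · -- t is a strict prefix of s
      obtain ⟨d, rfl⟩ := hp
      have hd : d ≠ [] := by rintro rfl; simp at he
      obtain ⟨k₀, d', rfl⟩ := List.exists_cons_of_ne_nil hd
      have hk₀ : (t ++ [k₀]) <+: (t ++ k₀ :: d') := ⟨d', by simp⟩
      have huniq : ∀ k : ℕ, k ≠ k₀ → aVec (t ++ k₀ :: d') (t ++ [k]) = 0 := by
        intro k hk
        rw [aVec_apply, if_neg]
        intro h
        apply hk
        obtain ⟨e, he'⟩ := h
        have : k :: e = k₀ :: d' := by
          apply List.append_cancel_left (as := t)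
          simpa using he'
        exact (List.cons.injEq _ _ _ _ ▸ this).1
      have hsum : ∑' k : ℕ, aVec (t ++ k₀ :: d') (t ++ [k])
          = (2 : ℝ) ^ (-(t.length : ℤ) - 1) := by
        rw [tsum_eq_single k₀ huniq, aVec_apply, if_pos hk₀]
        congr 1
        push_cast [List.length_append]
        simp
        ring
      have hbt : bVec (t ++ k₀ :: d') t = 0 := by
        rw [bVec_apply, if_neg]
        intro h
        have := congrArg List.length h
        simp at this
      rw [hsum, hbt, aVec_apply, if_pos ⟨k₀ :: d', rfl⟩]
      rw [zero_add]
      rw [show (-(t.length : ℤ) - 1) = (-(t.length : ℤ)) + (-1) by ring,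
        zpow_add₀ (by norm_num : (2:ℝ) ≠ 0)]
      ring
  · have hz : ∀ k : ℕ, aVec s (t ++ [k]) = 0 := by
      intro k
      rw [aVec_apply, if_neg]
      intro h
      exact hp ((List.prefix_append t [k]).trans h)
    have hne : t ≠ s := by rintro rfl; exact hp (List.prefix_refl _)
    simp [hz, aVec_apply, bVec_apply, if_neg hp, if_neg hne, tsum_zero]

/-- Every `ξ ⊕ η ∈ W_T` vanishes outside `T` and satisfies
`ξ(t) = η(t) + 2 ∑_k ξ(t⌢k)` for all `t`. -/
theorem mem_Wspace_support_and_recursion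
    (T : Set (List ℕ)) (hT : ∀ s ∈ T, ∀ t : List ℕ, t <+: s → t ∈ T)
    (x : (lp (fun _ : List ℕ => ℝ) 1) × (lp (fun _ : List ℕ => ℝ) 1))
    (hx : x ∈ Wspace T) :
    (∀ t : List ℕ, t ∉ T → x.1 t = 0 ∧ x.2 t = 0) ∧
    (∀ t : List ℕ, x.1 t = x.2 t + 2 * ∑' k : ℕ, x.1 (t ++ [k])) := by
  constructor
  · intro t ht
    constructor
    · have := vanish_of_vanish_gen T ((evalCLM t).comp (ContinuousLinearMap.fst ℝ _ _))
        (fun s hs => by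
          simp only [ContinuousLinearMap.comp_apply, ContinuousLinearMap.coe_fst',
            evalCLM_apply, aVec_apply]
          rw [if_neg (fun h => ht (hT s hs t h))]) hx
      simpa using this
    · have := vanish_of_vanish_gen T ((evalCLM t).comp (ContinuousLinearMap.snd ℝ _ _))
        (fun s hs => by
          simp only [ContinuousLinearMap.comp_apply, ContinuousLinearMap.coe_snd',
            evalCLM_apply, bVec_apply]
          rw [if_neg (fun h => ht (by rw [h]; exact hs))]) hx
      simpa using this
  · intro t
    have := vanish_of_vanish_gen T
      ((evalCLM t).comp (ContinuousLinearMap.fst ℝ _ _)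
        - (evalCLM t).comp (ContinuousLinearMap.snd ℝ _ _)
        - (2 : ℝ) • ((sumCLM t).comp (ContinuousLinearMap.fst ℝ _ _)))
      (fun s hs => by
        simp only [ContinuousLinearMap.sub_apply, ContinuousLinearMap.smul_apply,
          ContinuousLinearMap.comp_apply, ContinuousLinearMap.coe_fst',
          ContinuousLinearMap.coe_snd', evalCLM_apply, sumCLM_apply, smul_eq_mul]
        have := tsum_aVec_children s t
        linarith) hx
    simp only [ContinuousLinearMap.sub_apply, ContinuousLinearMap.smul_apply,
      ContinuousLinearMap.comp_apply, ContinuousLinearMap.coe_fst',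
      ContinuousLinearMap.coe_snd', evalCLM_apply, sumCLM_apply, smul_eq_mul] at this
    linarith
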